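/- Let S be a sequence over F_q with generating function G(x), let N ≥ 2 with G(x) ≢ 0 mod x^N, and let t_N and L_N be as in the shortest linear recurrence for the first N terms. Then E_N(S) ≥ L_N − t_N + 1 if N > (L_N − t_N)(L_N − min{1, t_N − 1}), and E_N(S) ≥ ⌈N / (L_N − min{1, t_N − 1})⌉ otherwise. -/

import Mathlib

/-- The `N`-th linear complexity of a sequence `s` over a field: the length of a
shortest linear recurrence satisfied by the first `N` terms. -/
noncomputable def linComplexityN {F : Type*} [Field F] (s : ℕ → F) (N : ℕ) : ℕ :=
  sInf {L | ∃ c : Fin L → F, ∀ i, i + L < N →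
    s (i + L) + ∑ ℓ : Fin L, c ℓ * s (i + ℓ.1) = 0}

open Classical in
/-- The `N`-th expansion complexity of a sequence `s` over a field: `0` if the first
`N` terms vanish, otherwise the least total degree of a nonzero bivariate polynomial
`h(x,y)` with `h(x, G(x)) ≡ 0 mod x^N`, where `G` is the generating function of `s`. -/
noncomputable def expComplexityN {F : Type*} [Field F] (s : ℕ → F) (N : ℕ) : ℕ :=
  if ∀ i < N, s i = 0 then 0 else
  sInf {d | ∃ h : MvPolynomial (Fin 2) F, h ≠ 0 ∧ h.totalDegree = d ∧
    (PowerSeries.X : PowerSeries F) ^ N ∣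
      MvPolynomial.aeval ![(PowerSeries.X : PowerSeries F), PowerSeries.mk s] h}

section ExpComplexityAux

open Polynomial Finset

variable {F : Type*} [Field F]

noncomputable def cpoly (c : ℕ → F) (L : ℕ) : F[X] :=
  ∑ k ∈ range (L+1), C (c (L-k)) * X^k

lemma coeff_cpoly (c : ℕ → F) (L k : ℕ) :
    (cpoly c L).coeff k = if k ≤ L then c (L - k) else 0 := by
  rw [cpoly, Polynomial.finset_sum_coeff]
  simp only [Polynomial.coeff_C_mul, Polynomial.coeff_X_pow, mul_ite, mul_one, mul_zero]
  rw [Finset.sum_ite_eq (range (L+1)) k fun k => c (L-k)]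
  simp [Nat.lt_succ_iff]

lemma cpoly_coeff_zero (c : ℕ → F) (L : ℕ) : (cpoly c L).coeff 0 = c L := by
  simp [coeff_cpoly]

lemma natDegree_cpoly_le (c : ℕ → F) (L t : ℕ) (hct' : ∀ ℓ < t, c ℓ = 0) :
    (cpoly c L).natDegree ≤ L - t := by
  rw [Polynomial.natDegree_le_iff_coeff_eq_zero]
  intro m hm
  rw [coeff_cpoly]
  split_ifs with h
  · exact hct' _ (by omega)
  · rfl

lemma cpoly_ne_zero (c : ℕ → F) (L : ℕ) (hcL : c L = 1) : cpoly c L ≠ 0 := fun h => by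
  have := cpoly_coeff_zero c L
  rw [h] at this; simp [hcL.symm ▸ this.symm] at this
  exact one_ne_zero (hcL ▸ this.symm)

lemma coeff_poly_mul_mk' (b : F[X]) (s : ℕ → F) {M m : ℕ} (hb : b.natDegree ≤ M) (hm : M ≤ m) :
    (PowerSeries.coeff m) ((b : PowerSeries F) * PowerSeries.mk s)
      = ∑ ℓ ∈ range (M+1), b.coeff (M - ℓ) * s (m - M + ℓ) := by
  rw [PowerSeries.coeff_mul, Finset.Nat.sum_antidiagonal_eq_sum_range_succ_mk]
  simp only [Polynomial.coeff_coe, PowerSeries.coeff_mk]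
  rw [← Finset.sum_subset (Finset.range_subset_range.2 (by omega) :
      range (M+1) ⊆ range (m+1))]
  · rw [← Finset.sum_range_reflect]
    apply Finset.sum_congr rfl
    intro ℓ hℓ
    simp only [Finset.mem_range] at hℓ
    have h1 : M + 1 - 1 - ℓ = M - ℓ := by omega
    have h2 : m - (M - ℓ) = m - M + ℓ := by omega
    rw [h1, h2]
  · intro k hk hk'
    simp only [Finset.mem_range] at hk hk'
    rw [Polynomial.coeff_eq_zero_of_natDegree_lt (by omega), zero_mul]

section main
variable (s : ℕ → F) (N : ℕ) (L t : ℕ) (c : ℕ → F)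

lemma coeff_cpolyG_eq_zero (htL : t ≤ L) (hct' : ∀ ℓ < t, c ℓ = 0)
    (hrec : ∀ i, i + L < N → ∑ ℓ ∈ Finset.range (L + 1), c ℓ * s (i + ℓ) = 0)
    {m : ℕ} (h1 : L ≤ m) (h2 : m < N) :
    (PowerSeries.coeff m) ((cpoly c L : PowerSeries F) * PowerSeries.mk s) = 0 := by
  rw [coeff_poly_mul_mk' (cpoly c L) s (le_trans (natDegree_cpoly_le c L t hct') (by omega)) h1]
  have : ∀ ℓ ∈ range (L+1), (cpoly c L).coeff (L - ℓ) * s (m - L + ℓ)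
      = c ℓ * s ((m - L) + ℓ) := by
    intro ℓ hℓ
    simp only [Finset.mem_range] at hℓ
    rw [coeff_cpoly]
    have h3 : L - (L - ℓ) = ℓ := by omega
    rw [if_pos (by omega), h3]
  rw [Finset.sum_congr rfl this]
  exact hrec (m - L) (by omega)

lemma exists_u (hG : ¬ (PowerSeries.X : PowerSeries F) ^ N ∣ PowerSeries.mk s)
    (htL : t ≤ L) (hcL : c L = 1) (hct' : ∀ ℓ < t, c ℓ = 0)
    (hrec : ∀ i, i + L < N → ∑ ℓ ∈ Finset.range (L + 1), c ℓ * s (i + ℓ) = 0) :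
    ∃ u : F[X], u ≠ 0 ∧ u.natDegree < L ∧
      (PowerSeries.X : PowerSeries F) ^ N ∣
        ((cpoly c L : PowerSeries F) * PowerSeries.mk s - u) := by
  set G := PowerSeries.mk s with hGdef
  set u := PowerSeries.trunc L ((cpoly c L : PowerSeries F) * G) with hu
  have hcpunit : IsUnit ((cpoly c L : PowerSeries F)) := by
    rw [PowerSeries.isUnit_iff_constantCoeff, Polynomial.constantCoeff_coe,
      cpoly_coeff_zero, hcL]
    exact isUnit_one
  have hdvd : (PowerSeries.X : PowerSeries F) ^ N ∣
      ((cpoly c L : PowerSeries F) * G - u) := by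
    rw [PowerSeries.X_pow_dvd_iff]
    intro m hm
    rw [map_sub, Polynomial.coeff_coe, PowerSeries.coeff_trunc]
    by_cases hmL : m < L
    · rw [if_pos hmL, sub_self]
    · rw [if_neg hmL,
        coeff_cpolyG_eq_zero s N L t c htL hct' hrec (by omega) hm, sub_zero]
  have hune : u ≠ 0 := by
    intro h0
    apply hG
    have : (PowerSeries.X : PowerSeries F) ^ N ∣ (cpoly c L : PowerSeries F) * G := by
      simpa [h0] using hdvd
    exact (IsUnit.dvd_mul_left hcpunit).1 this
  refine ⟨u, hune, ?_, hdvd⟩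
  have := PowerSeries.degree_trunc_lt ((cpoly c L : PowerSeries F) * G) L
  rwa [← hu, ← Polynomial.natDegree_lt_iff_degree_lt hune] at this

lemma lemA (hmin : ∀ L' < L, ¬ ∃ c' : Fin L' → F, ∀ i, i + L' < N →
      s (i + L') + ∑ ℓ : Fin L', c' ℓ * s (i + ℓ.1) = 0)
    (b v : F[X]) (hb0 : b.coeff 0 ≠ 0) (hv : v ≠ 0)
    (hdvd : (PowerSeries.X : PowerSeries F) ^ N ∣
      ((b : PowerSeries F) * PowerSeries.mk s - v)) :
    L ≤ max (v.natDegree + 1) b.natDegree := by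
  by_contra hlt
  push_neg at hlt
  set L' := max (v.natDegree + 1) b.natDegree with hL'
  have hvL' : v.natDegree + 1 ≤ L' := le_max_left _ _
  have hbL' : b.natDegree ≤ L' := le_max_right _ _
  apply hmin L' hlt
  refine ⟨fun ℓ => b.coeff (L' - ℓ.1) / b.coeff 0, fun i hi => ?_⟩
  have hm : i + L' < N := hi
  have hcoeff : (PowerSeries.coeff (R := F) (i + L'))
      ((b : PowerSeries F) * PowerSeries.mk s - v) = 0 := by
    rw [PowerSeries.X_pow_dvd_iff] at hdvd
    exact hdvd _ hm
  rw [map_sub, Polynomial.coeff_coe,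
    Polynomial.coeff_eq_zero_of_natDegree_lt (by omega : v.natDegree < i + L'),
    sub_zero, coeff_poly_mul_mk' b s hbL' (by omega)] at hcoeff
  rw [Finset.sum_range_succ] at hcoeff
  have hsimp : L' - L' = 0 := by omega
  have hsimp2 : i + L' - L' = i := by omega
  rw [hsimp, hsimp2] at hcoeff
  -- hcoeff : ∑ ℓ ∈ range L', b.coeff (L' - ℓ) * s (i + L' - L' + ℓ) + b.coeff 0 * s (i + L') = 0
  apply mul_left_cancel₀ hb0
  rw [mul_zero, mul_add, Finset.mul_sum, Fin.sum_univ_eq_sum_range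
    (fun ℓ => b.coeff 0 * (b.coeff (L' - ℓ) / b.coeff 0 * s (i + ℓ))) L']
  have : ∀ ℓ ∈ range L', b.coeff 0 * (b.coeff (L' - ℓ) / b.coeff 0 * s (i + ℓ))
      = b.coeff (L' - ℓ) * s (i + ℓ) := by
    intro ℓ _
    field_simp
  rw [Finset.sum_congr rfl this]
  linear_combination hcoeff

lemma coprime_cp_u (htL : t ≤ L) (hcL : c L = 1) (hct' : ∀ ℓ < t, c ℓ = 0)
    (hmin : ∀ L' < L, ¬ ∃ c' : Fin L' → F, ∀ i, i + L' < N →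
      s (i + L') + ∑ ℓ : Fin L', c' ℓ * s (i + ℓ.1) = 0)
    (u : F[X]) (hu0 : u ≠ 0) (hud : u.natDegree < L)
    (hdvd : (PowerSeries.X : PowerSeries F) ^ N ∣
      ((cpoly c L : PowerSeries F) * PowerSeries.mk s - u)) :
    IsCoprime (cpoly c L) u := by
  classical
  by_contra hnc
  rw [← EuclideanDomain.gcd_isUnit_iff] at hnc
  set g := EuclideanDomain.gcd (cpoly c L) u with hg
  have hcp0 : (cpoly c L).coeff 0 = 1 := by rw [cpoly_coeff_zero, hcL]
  have hcpne : cpoly c L ≠ 0 := cpoly_ne_zero c L hcL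
  have hgne : g ≠ 0 := by
    intro h0
    rw [hg, EuclideanDomain.gcd_eq_zero_iff] at h0
    exact hcpne h0.1
  obtain ⟨b, hb⟩ : g ∣ cpoly c L := EuclideanDomain.gcd_dvd_left _ _
  obtain ⟨v, hv⟩ : g ∣ u := EuclideanDomain.gcd_dvd_right _ _
  have hbne : b ≠ 0 := by rintro rfl; simp at hb; exact hcpne hb
  have hvne : v ≠ 0 := by rintro rfl; simp at hv; exact hu0 hv
  have hg0 : g.coeff 0 ≠ 0 := by
    intro h0
    have : g.coeff 0 * b.coeff 0 = 1 := by
      rw [← Polynomial.mul_coeff_zero, ← hb, hcp0]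
    rw [h0, zero_mul] at this
    exact zero_ne_one this
  have hb0 : b.coeff 0 ≠ 0 := by
    intro h0
    have : g.coeff 0 * b.coeff 0 = 1 := by
      rw [← Polynomial.mul_coeff_zero, ← hb, hcp0]
    rw [h0, mul_zero] at this
    exact zero_ne_one this
  have hgdeg : 1 ≤ g.natDegree := by
    by_contra hgd
    push_neg at hgd
    apply hnc
    have hgC : g = C (g.coeff 0) := Polynomial.eq_C_of_natDegree_eq_zero (by omega)
    rw [hgC]
    exact (Polynomial.isUnit_C).2 hg0.isUnit
  -- divisibility transfer
  have hgunit : IsUnit (g : PowerSeries F) := by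
    rw [PowerSeries.isUnit_iff_constantCoeff, Polynomial.constantCoeff_coe]
    exact hg0.isUnit
  have hdvd2 : (PowerSeries.X : PowerSeries F) ^ N ∣
      ((b : PowerSeries F) * PowerSeries.mk s - v) := by
    have heq : (cpoly c L : PowerSeries F) * PowerSeries.mk s - u
        = (g : PowerSeries F) * ((b : PowerSeries F) * PowerSeries.mk s - v) := by
      rw [hb, hv]
      push_cast
      ring
    rw [heq] at hdvd
    exact (IsUnit.dvd_mul_left hgunit).1 hdvd
  have hkey := lemA s N L hmin b v hb0 hvne hdvd2
  have hdcp : g.natDegree + b.natDegree = (cpoly c L).natDegree := by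
    rw [hb, Polynomial.natDegree_mul hgne hbne]
  have hcpd : (cpoly c L).natDegree ≤ L - t := natDegree_cpoly_le c L t hct'
  have hdu : g.natDegree + v.natDegree = u.natDegree := by
    rw [hv, Polynomial.natDegree_mul hgne hvne]
  have h1 : b.natDegree < L := by omega
  have h2 : v.natDegree + 1 < L := by omega
  have := max_lt h2 h1
  omega

end main

section decomp

noncomputable def e2 (i j : ℕ) : Fin 2 →₀ ℕ := Finsupp.single 0 i + Finsupp.single 1 j

@[simp] lemma e2_apply0 (i j : ℕ) : e2 i j 0 = i := by simp [e2]
@[simp] lemma e2_apply1 (i j : ℕ) : e2 i j 1 = j := by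
  simp [e2, Finsupp.single_apply]

lemma eq_e2 (m : Fin 2 →₀ ℕ) : m = e2 (m 0) (m 1) := by
  ext a
  fin_cases a
  · simp
  · simp

lemma weight_e2 (m : Fin 2 →₀ ℕ) : (m.sum fun _ e => e) = m 0 + m 1 := by
  rw [Finsupp.sum_fintype _ _ (fun _ => rfl), Fin.sum_univ_two]

variable {F : Type*} [Field F] (h : MvPolynomial (Fin 2) F)

noncomputable def hpj (j : ℕ) : F[X] :=
  ∑ i ∈ range (h.totalDegree + 1), C (MvPolynomial.coeff (e2 i j) h) * X^i

lemma coeff_hpj (j i : ℕ) :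
    (hpj h j).coeff i = if i ≤ h.totalDegree then MvPolynomial.coeff (e2 i j) h else 0 := by
  rw [hpj, Polynomial.finset_sum_coeff]
  simp only [Polynomial.coeff_C_mul, Polynomial.coeff_X_pow, mul_ite, mul_one, mul_zero]
  rw [Finset.sum_ite_eq (range (h.totalDegree + 1)) i fun i => MvPolynomial.coeff (e2 i j) h]
  simp [Nat.lt_succ_iff]

lemma support_wt {m : Fin 2 →₀ ℕ} (hm : m ∈ h.support) : m 0 + m 1 ≤ h.totalDegree := by
  rw [← weight_e2]; exact MvPolynomial.le_totalDegree hm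

lemma natDegree_hpj_le {j : ℕ} (hj : j ≤ h.totalDegree) :
    (hpj h j).natDegree ≤ h.totalDegree - j := by
  rw [Polynomial.natDegree_le_iff_coeff_eq_zero]
  intro i hi
  rw [coeff_hpj]
  split_ifs with hle
  · by_contra hne
    have hmem : e2 i j ∈ h.support := MvPolynomial.mem_support_iff.2 hne
    have := support_wt h hmem
    simp only [e2_apply0, e2_apply1] at this
    omega
  · rfl

lemma aeval_decomp {A : Type*} [CommRing A] [Algebra F A] (x y : A) :
    MvPolynomial.aeval ![x, y] h
      = ∑ j ∈ range (h.totalDegree + 1), Polynomial.aeval x (hpj h j) * y ^ j := by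
  classical
  set d := h.totalDegree with hd
  have hterm : ∀ j, Polynomial.aeval x (hpj h j)
      = ∑ i ∈ range (d + 1), algebraMap F A (MvPolynomial.coeff (e2 i j) h) * x ^ i := by
    intro j
    rw [hpj, map_sum]
    refine Finset.sum_congr rfl fun i _ => ?_
    rw [map_mul, Polynomial.aeval_C, map_pow, Polynomial.aeval_X]
  have hrhs : ∑ j ∈ range (d + 1), Polynomial.aeval x (hpj h j) * y ^ j
      = ∑ p ∈ range (d + 1) ×ˢ range (d + 1),
          algebraMap F A (MvPolynomial.coeff (e2 p.2 p.1) h) * x ^ p.2 * y ^ p.1 := by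
    rw [Finset.sum_product]
    refine Finset.sum_congr rfl fun j _ => ?_
    rw [hterm, Finset.sum_mul]
  rw [hrhs]
  conv_lhs => rw [MvPolynomial.as_sum h]
  rw [map_sum]
  set grid := range (d + 1) ×ˢ range (d + 1) with hgrid
  set f : (ℕ × ℕ) → A := fun p =>
    algebraMap F A (MvPolynomial.coeff (e2 p.2 p.1) h) * x ^ p.2 * y ^ p.1 with hf
  set P : ℕ × ℕ → Prop := fun p => e2 p.2 p.1 ∈ h.support with hP
  have hsplit : ∑ p ∈ grid, f p
      = ∑ p ∈ grid.filter P, f p + ∑ p ∈ grid.filter (fun p => ¬ P p), f p :=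
    (Finset.sum_filter_add_sum_filter_not grid P f).symm
  have hzero : ∑ p ∈ grid.filter (fun p => ¬ P p), f p = 0 := by
    refine Finset.sum_eq_zero fun p hp => ?_
    simp only [Finset.mem_filter, hP] at hp
    have : MvPolynomial.coeff (e2 p.2 p.1) h = 0 := by
      by_contra hne
      exact hp.2 (MvPolynomial.mem_support_iff.2 hne)
    simp [hf, this]
  rw [hsplit, hzero, add_zero]
  refine Finset.sum_nbij' (fun m => ((m 1 : ℕ), (m 0 : ℕ))) (fun p => e2 p.2 p.1)
    ?_ ?_ ?_ ?_ ?_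
  · intro m hm
    have hw := support_wt h hm
    simp only [Finset.mem_filter, hgrid, Finset.mem_product, Finset.mem_range, hP]
    refine ⟨⟨by omega, by omega⟩, ?_⟩
    rw [← eq_e2]; exact hm
  · intro p hp
    simp only [Finset.mem_filter, hP] at hp
    exact hp.2
  · intro m _; exact (eq_e2 m).symm
  · intro p hp
    simp only [Finset.mem_filter, hgrid, Finset.mem_product, Finset.mem_range] at hp
    simp
  · intro m hm
    rw [MvPolynomial.aeval_monomial, hf]
    simp only [← eq_e2]
    rw [Finsupp.prod_fintype _ _ (fun i => pow_zero _), Fin.prod_univ_two]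
    simp only [Matrix.cons_val_zero, Matrix.cons_val_one, Matrix.head_cons]
    ring

lemma hpj_all_zero (hall : ∀ j ≤ h.totalDegree, hpj h j = 0) : h = 0 := by
  by_contra hne
  obtain ⟨m, hm⟩ := MvPolynomial.ne_zero_iff.1 hne
  have hw := support_wt h (MvPolynomial.mem_support_iff.2 hm)
  have h0 : (hpj h (m 1)).coeff (m 0) = MvPolynomial.coeff m h := by
    rw [coeff_hpj, if_pos (by omega), ← eq_e2]
  rw [hall (m 1) (by omega)] at h0
  simp at h0
  exact hm h0.symm

end decomp

lemma arith_bound (d j L t : ℕ) (hj : j ≤ d) (ht : t ≤ L) (hL : 1 ≤ L) :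
    (d - j) + j * (L - 1) + (d - j) * (L - t) ≤ d * (L + 1 - min 2 t) := by
  obtain ⟨a, rfl⟩ : ∃ a, d = j + a := ⟨d - j, by omega⟩
  obtain ⟨b, rfl⟩ : ∃ b, L = b + 1 := ⟨L - 1, by omega⟩
  simp only [Nat.add_sub_cancel_left, Nat.add_sub_cancel]
  rcases Nat.lt_or_ge t 2 with h2 | h2
  · interval_cases t
    · simp only [Nat.min_zero, Nat.sub_zero]
      nlinarith
    · have hmin : min 2 1 = 1 := by norm_num
      rw [hmin]
      have : b + 1 - 1 = b := by omega
      rw [this]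
      have : b + 1 + 1 - 1 = b + 1 := by omega
      rw [this]
      nlinarith
  · have hmin : min 2 t = 2 := by omega
    rw [hmin]
    obtain ⟨e, he⟩ : ∃ e, b + 1 - t = e ∧ e + 1 ≤ b := by
      refine ⟨b + 1 - t, rfl, by omega⟩
    rw [he.1]
    have h3 : b + 1 + 1 - 2 = b := by omega
    rw [h3]
    have : a * e + a ≤ a * b := by
      calc a * e + a = a * (e + 1) := by ring
      _ ≤ a * b := Nat.mul_le_mul_left a he.2
    nlinarith

lemma natDegree_cpoly {F : Type*} [Field F] (c : ℕ → F) (L t : ℕ) (htL : t ≤ L)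
    (hct : c t ≠ 0) (hct' : ∀ ℓ < t, c ℓ = 0) : (cpoly c L).natDegree = L - t := by
  refine le_antisymm (natDegree_cpoly_le c L t hct') (Polynomial.le_natDegree_of_ne_zero ?_)
  rw [coeff_cpoly, if_pos (by omega)]
  have : L - (L - t) = t := by omega
  rw [this]
  exact hct

lemma core_bound {F : Type*} [Field F] (s : ℕ → F) (N : ℕ) (hN : 2 ≤ N)
    (hG : ¬ (PowerSeries.X : PowerSeries F) ^ N ∣ PowerSeries.mk s)
    (L t : ℕ) (htL : t ≤ L)
    (c : ℕ → F) (hcL : c L = 1) (hct : c t ≠ 0) (hct' : ∀ ℓ < t, c ℓ = 0)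
    (hrec : ∀ i, i + L < N → ∑ ℓ ∈ Finset.range (L + 1), c ℓ * s (i + ℓ) = 0)
    (hmin : ∀ L' < L, ¬ ∃ c' : Fin L' → F, ∀ i, i + L' < N →
      s (i + L') + ∑ ℓ : Fin L', c' ℓ * s (i + ℓ.1) = 0)
    (h : MvPolynomial (Fin 2) F) (hh : h ≠ 0)
    (hdvd : (PowerSeries.X : PowerSeries F) ^ N ∣
      MvPolynomial.aeval ![(PowerSeries.X : PowerSeries F), PowerSeries.mk s] h) :
    N ≤ h.totalDegree * (L + 1 - min 2 t) ∨ L - t + 1 ≤ h.totalDegree := by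
  classical
  set d := h.totalDegree with hd
  set G := PowerSeries.mk s with hGdef
  -- L ≥ 1
  have hL1 : 1 ≤ L := by
    by_contra hL0
    push_neg at hL0
    interval_cases L
    apply hG
    rw [PowerSeries.X_pow_dvd_iff]
    intro m hm
    have ht0 : t = 0 := by omega
    have := hrec m (by omega)
    rw [Finset.sum_range_one, add_zero] at this
    rw [hcL, one_mul] at this
    rw [PowerSeries.coeff_mk]
    exact this
  obtain ⟨u, hu0, hud, hdvdu⟩ := exists_u s N L t c hG htL hcL hct' hrec
  have hcop : IsCoprime (cpoly c L) u :=
    coprime_cp_u s N L t c htL hcL hct' hmin u hu0 hud hdvdu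
  have hcpne : cpoly c L ≠ 0 := cpoly_ne_zero c L hcL
  have hcpdeg : (cpoly c L).natDegree = L - t := natDegree_cpoly c L t htL hct hct'
  set P : F[X] := ∑ j ∈ range (d+1), hpj h j * u ^ j * (cpoly c L) ^ (d - j) with hP
  -- X^N divides P
  have hPdvd : (PowerSeries.X : PowerSeries F) ^ N ∣ (P : PowerSeries F) := by
    have hA : MvPolynomial.aeval ![(PowerSeries.X : PowerSeries F), G] h
        = ∑ j ∈ range (d+1), ((hpj h j : PowerSeries F)) * G ^ j := by
      rw [aeval_decomp h (PowerSeries.X : PowerSeries F) G]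
      refine Finset.sum_congr rfl fun j _ => ?_
      congr 1
      rw [Polynomial.aeval_def, ← Polynomial.eval₂_C_X_eq_coe]
      rfl
    have hdiff : (PowerSeries.X : PowerSeries F) ^ N ∣
        ((P : PowerSeries F) - (cpoly c L : PowerSeries F) ^ d *
          MvPolynomial.aeval ![(PowerSeries.X : PowerSeries F), G] h) := by
      rw [hA, Finset.mul_sum, hP, ← Polynomial.coeToPowerSeries.ringHom_apply, map_sum]
      simp only [map_mul, map_pow, Polynomial.coeToPowerSeries.ringHom_apply]
      rw [← Finset.sum_sub_distrib]
      refine Finset.dvd_sum fun j hj => ?_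
      simp only [Finset.mem_range] at hj
      have hsplit : ((cpoly c L : PowerSeries F)) ^ d
          = ((cpoly c L : PowerSeries F)) ^ (d - j) * ((cpoly c L : PowerSeries F)) ^ j := by
        rw [← pow_add]
        congr 1
        omega
      have heq : (hpj h j : PowerSeries F) * (u : PowerSeries F) ^ j *
            (cpoly c L : PowerSeries F) ^ (d - j)
          - (cpoly c L : PowerSeries F) ^ d * ((hpj h j : PowerSeries F) * G ^ j)
          = (hpj h j : PowerSeries F) * (cpoly c L : PowerSeries F) ^ (d - j) *
            ((u : PowerSeries F) ^ j - ((cpoly c L : PowerSeries F) * G) ^ j) := by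
        rw [hsplit]
        ring
      rw [heq]
      refine Dvd.dvd.mul_left ?_ _
      have hbase : (PowerSeries.X : PowerSeries F) ^ N ∣
          ((u : PowerSeries F) - (cpoly c L : PowerSeries F) * G) := by
        have := hdvdu
        rw [← dvd_neg] at this
        simpa [neg_sub] using this
      exact hbase.trans (sub_dvd_pow_sub_pow _ _ j)
    have h2 : (PowerSeries.X : PowerSeries F) ^ N ∣
        (cpoly c L : PowerSeries F) ^ d *
          MvPolynomial.aeval ![(PowerSeries.X : PowerSeries F), G] h :=
      Dvd.dvd.mul_left hdvd _
    have := dvd_add hdiff h2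
    simpa using this
  by_cases hP0 : P = 0
  · right
    by_contra hdlt
    push_neg at hdlt
    have hdle : d ≤ L - t := by omega
    have hall : ∀ i, i ≤ d → hpj h (d - i) = 0 := by
      intro i
      induction i using Nat.strong_induction_on with
      | _ i ih =>
        intro hi
        set j := d - i with hj
        have hgt : ∀ k, j < k → k ≤ d → hpj h k = 0 := by
          intro k hk1 hk2
          have := ih (d - k) (by omega) (by omega)
          rwa [show d - (d - k) = k by omega] at this
        have hsum : ∑ k ∈ range (j+1), hpj h k * u ^ k * (cpoly c L) ^ (j - k) = 0 := by
          have h1 : ∑ k ∈ range (j+1), hpj h k * u ^ k * (cpoly c L) ^ (d - k) = P := by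
            rw [hP]
            refine Finset.sum_subset (Finset.range_subset_range.2 (by omega)) ?_
            intro k hk hk'
            simp only [Finset.mem_range] at hk hk'
            rw [hgt k (by omega) (by omega), zero_mul, zero_mul]
          have h2 : ∑ k ∈ range (j+1), hpj h k * u ^ k * (cpoly c L) ^ (d - k)
              = (∑ k ∈ range (j+1), hpj h k * u ^ k * (cpoly c L) ^ (j - k)) *
                (cpoly c L) ^ (d - j) := by
            rw [Finset.sum_mul]
            refine Finset.sum_congr rfl fun k hk => ?_
            simp only [Finset.mem_range] at hk
            rw [show d - k = (j - k) + (d - j) from by omega, pow_add]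
            ring
          rw [h2, hP0] at h1
          rcases mul_eq_zero.1 h1 with h3 | h3
          · exact h3
          · exact absurd (pow_eq_zero_iff'.1 h3).1 hcpne
        rcases Nat.eq_zero_or_pos j with hj0 | hjpos
        · rw [hj0] at hsum ⊢
          simpa using hsum
        · rw [Finset.sum_range_succ] at hsum
          have hdvdj : cpoly c L ∣ hpj h j * u ^ j := by
            have hjj : j - j = 0 := by omega
            rw [hjj, pow_zero, mul_one] at hsum
            have : hpj h j * u ^ j
                = - ∑ k ∈ range j, hpj h k * u ^ k * (cpoly c L) ^ (j - k) := by
              linear_combination hsum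
            rw [this]
            refine dvd_neg.2 (Finset.dvd_sum fun k hk => ?_)
            simp only [Finset.mem_range] at hk
            have : (cpoly c L) ^ (j - k) = cpoly c L * (cpoly c L) ^ (j - k - 1) := by
              rw [← pow_succ']
              congr 1
              omega
            rw [this]
            exact ⟨hpj h k * u ^ k * cpoly c L ^ (j - k - 1), by ring⟩
          have hdvdj2 : cpoly c L ∣ hpj h j :=
            (hcop.pow_right).dvd_of_dvd_mul_right hdvdj
          by_contra hne
          have hdd : (cpoly c L).natDegree ≤ (hpj h j).natDegree :=
            Polynomial.natDegree_le_of_dvd hdvdj2 hne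
          have hup : (hpj h j).natDegree ≤ d - j := natDegree_hpj_le h (by omega)
          omega
    apply hh
    apply hpj_all_zero
    intro j hj
    have := hall (d - j) (by omega)
    rwa [show d - (d - j) = j by omega] at this
  · left
    have hPN : N ≤ P.natDegree := by
      by_contra hPd
      push_neg at hPd
      apply hP0
      ext n
      rw [Polynomial.coeff_zero]
      rcases Nat.lt_or_ge n N with hn | hn
      · rw [PowerSeries.X_pow_dvd_iff] at hPdvd
        have := hPdvd n hn
        rwa [Polynomial.coeff_coe] at this
      · exact Polynomial.coeff_eq_zero_of_natDegree_lt (by omega)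
    have hdeg : P.natDegree ≤ d * (L + 1 - min 2 t) := by
      rw [hP]
      refine Polynomial.natDegree_sum_le_of_forall_le _ _ fun j hj => ?_
      simp only [Finset.mem_range] at hj
      calc (hpj h j * u ^ j * (cpoly c L) ^ (d - j)).natDegree
          ≤ (hpj h j * u ^ j).natDegree + ((cpoly c L) ^ (d - j)).natDegree :=
            Polynomial.natDegree_mul_le
        _ ≤ (hpj h j).natDegree + (u ^ j).natDegree + ((cpoly c L) ^ (d - j)).natDegree := by
            exact Nat.add_le_add_right Polynomial.natDegree_mul_le _
        _ ≤ (d - j) + j * (L - 1) + (d - j) * (L - t) := by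
            refine Nat.add_le_add (Nat.add_le_add (natDegree_hpj_le h (by omega)) ?_) ?_
            · exact (Polynomial.natDegree_pow_le).trans
                (Nat.mul_le_mul_left j (by omega))
            · exact (Polynomial.natDegree_pow_le).trans
                (Nat.mul_le_mul_left _ (by omega))
        _ ≤ d * (L + 1 - min 2 t) := arith_bound d j L t (by omega) htL hL1
    omega


end ExpComplexityAux

theorem expComplexityN_lower_bound_aperiodic {F : Type*} [Field F] [Fintype F]
    (s : ℕ → F) (N : ℕ) (hN : 2 ≤ N)
    (hG : ¬ (PowerSeries.X : PowerSeries F) ^ N ∣ PowerSeries.mk s)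
    (L t : ℕ) (hL : linComplexityN s N = L) (htL : t ≤ L)
    (c : ℕ → F) (hcL : c L = 1) (hct : c t ≠ 0) (hct' : ∀ ℓ < t, c ℓ = 0)
    (hrec : ∀ i, i + L < N → ∑ ℓ ∈ Finset.range (L + 1), c ℓ * s (i + ℓ) = 0)
    (hmin : ∀ L' < L, ¬ ∃ c' : Fin L' → F, ∀ i, i + L' < N →
      s (i + L') + ∑ ℓ : Fin L', c' ℓ * s (i + ℓ.1) = 0) :
    ((L - t) * (L + 1 - min 2 t) < N → L - t + 1 ≤ expComplexityN s N) ∧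
    (N ≤ (L - t) * (L + 1 - min 2 t) → N ⌈/⌉ (L + 1 - min 2 t) ≤ expComplexityN s N) := by
  classical
  -- the first N terms are not all zero
  have hex : ¬ ∀ i < N, s i = 0 := by
    intro hall
    apply hG
    rw [PowerSeries.X_pow_dvd_iff]
    intro m hm
    rw [PowerSeries.coeff_mk]
    exact hall m hm
  -- L ≥ 1
  have hL1 : 1 ≤ L := by
    by_contra hL0
    push_neg at hL0
    interval_cases L
    apply hG
    rw [PowerSeries.X_pow_dvd_iff]
    intro m hm
    have := hrec m (by omega)
    rw [Finset.sum_range_one, add_zero, hcL, one_mul] at this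
    rw [PowerSeries.coeff_mk]
    exact this
  set m := L + 1 - min 2 t with hmm
  have hm1 : 1 ≤ m := by
    rcases Nat.lt_or_ge t 2 with h2 | h2
    · have : min 2 t = t := by omega
      omega
    · have : min 2 t = 2 := by omega
      omega
  -- unfold expComplexityN
  rw [expComplexityN, if_neg hex]
  set D := {d | ∃ h : MvPolynomial (Fin 2) F, h ≠ 0 ∧ h.totalDegree = d ∧
    (PowerSeries.X : PowerSeries F) ^ N ∣
      MvPolynomial.aeval ![(PowerSeries.X : PowerSeries F), PowerSeries.mk s] h} with hD
  have hDne : D.Nonempty := by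
    refine ⟨N, (MvPolynomial.X 0 : MvPolynomial (Fin 2) F) ^ N,
      pow_ne_zero _ (MvPolynomial.X_ne_zero 0), ?_, ?_⟩
    · rw [MvPolynomial.totalDegree_X_pow]
    · rw [map_pow, MvPolynomial.aeval_X]
      simp
  obtain ⟨h, hh, hdeg, hdvd⟩ := Nat.sInf_mem hDne
  set E := sInf D with hE
  have hcore := core_bound s N hN hG L t htL c hcL hct hct' hrec hmin h hh hdvd
  rw [hdeg] at hcore
  constructor
  · intro hlt
    rcases hcore with hc | hc
    · have : (L - t) * m < E * m := lt_of_lt_of_le hlt hc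
      have := Nat.lt_of_mul_lt_mul_right this
      omega
    · exact hc
  · intro hle
    have hNE : N ≤ E * m := by
      rcases hcore with hc | hc
      · exact hc
      · calc N ≤ (L - t) * m := hle
          _ ≤ E * m := Nat.mul_le_mul_right m (by omega)
    rw [ceilDiv_le_iff_le_mul (by omega : 0 < m)]
    exact hNE.trans (le_of_eq (mul_comm E m))
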